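/- Let R₁, ..., R_m be independent real-valued random variables and q* ∈ ℝ such that P(Rᵢ ≤ q*) = 1 - αᵢ* with αᵢ* ≥ 0 summing to α > 0 and each αᵢ* ≤ 1. Then P(max(R₁,...,R_m) ≤ q*) < 1 - α + α²/2, and hence q* ≤ quantile(max(R₁,...,R_m), 1 - α + α²/2). -/

import Mathlib

open MeasureTheory ProbabilityTheory

private lemma prod_le_g {ι : Type*} (a : ι → ℝ) :
    ∀ (s : Finset ι), (∀ i ∈ s, 0 ≤ a i) → (∀ i ∈ s, a i ≤ 1) →
      ∏ i ∈ s, (1 - a i) ≤ 1 - (∑ i ∈ s, a i) + (∑ i ∈ s, a i) ^ 2 / 2 := by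
  classical
  intro s
  induction s using Finset.induction_on with
  | empty => simp
  | @insert x s hx ih =>
    intro h0 h1
    rw [Finset.prod_insert hx, Finset.sum_insert hx]
    have hS0 : 0 ≤ ∑ i ∈ s, a i :=
      Finset.sum_nonneg fun i hi => h0 i (Finset.mem_insert_of_mem hi)
    have hP := ih (fun i hi => h0 i (Finset.mem_insert_of_mem hi))
      (fun i hi => h1 i (Finset.mem_insert_of_mem hi))
    have hx0 : 0 ≤ a x := h0 x (Finset.mem_insert_self x s)
    have hx1 : a x ≤ 1 := h1 x (Finset.mem_insert_self x s)
    nlinarith [Finset.prod_nonneg (fun i (hi : i ∈ s) =>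
      sub_nonneg.mpr (h1 i (Finset.mem_insert_of_mem hi)))]

private lemma prod_lt_g {ι : Type*} [Fintype ι] (a : ι → ℝ) (α : ℝ)
    (h0 : ∀ i, 0 ≤ a i) (h1 : ∀ i, a i ≤ 1) (hsum : ∑ i, a i = α) (hα : 0 < α) :
    ∏ i, (1 - a i) < 1 - α + α ^ 2 / 2 := by
  classical
  have hex : ∃ i, 0 < a i := by
    by_contra h
    push_neg at h
    have : ∑ i, a i ≤ 0 := Finset.sum_nonpos fun i _ => h i
    linarith [hsum ▸ this]
  obtain ⟨i₀, hi₀⟩ := hex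
  rw [← Finset.prod_erase_mul _ _ (Finset.mem_univ i₀)]
  set S := ∑ i ∈ Finset.univ.erase i₀, a i with hS
  have hsplit : S + a i₀ = α := by
    rw [hS, ← hsum, Finset.sum_erase_add _ _ (Finset.mem_univ i₀)]
  have hS0 : 0 ≤ S := Finset.sum_nonneg fun i _ => h0 i
  have hP := prod_le_g a (Finset.univ.erase i₀) (fun i _ => h0 i) (fun i _ => h1 i)
  rw [← hS] at hP
  have hx1 : a i₀ ≤ 1 := h1 i₀
  calc (∏ i ∈ Finset.univ.erase i₀, (1 - a i)) * (1 - a i₀)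
      ≤ (1 - S + S ^ 2 / 2) * (1 - a i₀) := by
        apply mul_le_mul_of_nonneg_right hP (by linarith)
    _ < 1 - α + α ^ 2 / 2 := by nlinarith

theorem equalized_allocation_suboptimality {Ω : Type*} [MeasurableSpace Ω]
    (μ : Measure Ω) [IsProbabilityMeasure μ]
    {ι : Type*} [Fintype ι] [Nonempty ι]
    (R : ι → Ω → ℝ) (hmeas : ∀ i, Measurable (R i))
    (hindep : iIndepFun R μ)
    (qstar : ℝ) (a : ι → ℝ) (α : ℝ)
    (ha0 : ∀ i, 0 ≤ a i) (ha1 : ∀ i, a i ≤ 1)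
    (hsum : ∑ i, a i = α) (hα : 0 < α) (hα1 : α < 1)
    (hq : ∀ i, (μ {ω | R i ω ≤ qstar}).toReal = 1 - a i) :
    (μ {ω | Finset.univ.sup' Finset.univ_nonempty (fun i => R i ω) ≤ qstar}).toReal <
        1 - α + α ^ 2 / 2 ∧
      qstar ≤ sInf {q : ℝ | 1 - α + α ^ 2 / 2 ≤
        (μ {ω | Finset.univ.sup' Finset.univ_nonempty (fun i => R i ω) ≤ q}).toReal} := by
  have hset : ∀ q : ℝ, {ω | Finset.univ.sup' Finset.univ_nonempty (fun i => R i ω) ≤ q}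
      = ⋂ i, {ω | R i ω ≤ q} := by
    intro q
    ext ω
    simp [Finset.sup'_le_iff]
  have hprod : ∀ q : ℝ,
      μ {ω | Finset.univ.sup' Finset.univ_nonempty (fun i => R i ω) ≤ q}
        = ∏ i, μ {ω | R i ω ≤ q} := by
    intro q
    rw [hset q]
    exact hindep.meas_iInter fun i =>
      ⟨Set.Iic q, measurableSet_Iic, rfl⟩
  have hfin : ∀ (q : ℝ) (i : ι), μ {ω | R i ω ≤ q} ≠ ⊤ :=
    fun q i => measure_ne_top μ _
  have hmax_toReal : ∀ q : ℝ,
      (μ {ω | Finset.univ.sup' Finset.univ_nonempty (fun i => R i ω) ≤ q}).toReal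
        = ∏ i, (μ {ω | R i ω ≤ q}).toReal := by
    intro q
    rw [hprod q, ENNReal.toReal_prod]
  have hpart1 :
      (μ {ω | Finset.univ.sup' Finset.univ_nonempty (fun i => R i ω) ≤ qstar}).toReal <
        1 - α + α ^ 2 / 2 := by
    rw [hmax_toReal qstar]
    have : ∏ i, (μ {ω | R i ω ≤ qstar}).toReal = ∏ i, (1 - a i) := by
      exact Finset.prod_congr rfl fun i _ => hq i
    rw [this]
    exact prod_lt_g a α ha0 ha1 hsum hα
  refine ⟨hpart1, ?_⟩
  -- set nonempty: measure tends to 1 along n → ∞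
  have hthresh : 1 - α + α ^ 2 / 2 < 1 := by nlinarith
  have hmono : Monotone (fun n : ℕ =>
      {ω | Finset.univ.sup' Finset.univ_nonempty (fun i => R i ω) ≤ (n : ℝ)}) := by
    intro m n hmn ω hω
    simp only [Set.mem_setOf_eq] at hω ⊢
    exact le_trans hω (by exact_mod_cast hmn)
  have hunion : (⋃ n : ℕ, {ω | Finset.univ.sup' Finset.univ_nonempty
      (fun i => R i ω) ≤ (n : ℝ)}) = Set.univ := by
    ext ω
    simp only [Set.mem_iUnion, Set.mem_setOf_eq, Set.mem_univ, iff_true]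
    obtain ⟨n, hn⟩ := exists_nat_ge (Finset.univ.sup' Finset.univ_nonempty (fun i => R i ω))
    exact ⟨n, hn⟩
  have htend := tendsto_measure_iUnion_atTop (μ := μ) hmono
  rw [hunion, measure_univ] at htend
  have htendR : Filter.Tendsto (fun n : ℕ =>
      (μ {ω | Finset.univ.sup' Finset.univ_nonempty (fun i => R i ω) ≤ (n : ℝ)}).toReal)
      Filter.atTop (nhds 1) := by
    have := (ENNReal.tendsto_toReal (by norm_num)).comp htend
    exact this
  have hev : ∀ᶠ n : ℕ in Filter.atTop, 1 - α + α ^ 2 / 2 ≤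
      (μ {ω | Finset.univ.sup' Finset.univ_nonempty (fun i => R i ω) ≤ (n : ℝ)}).toReal := by
    exact htendR.eventually (eventually_ge_nhds hthresh)
  obtain ⟨n, hn⟩ := hev.exists
  refine le_csInf ⟨(n : ℝ), ?_⟩ ?_
  · exact hn
  intro q hqmem
  by_contra hlt
  push_neg at hlt
  have hsub : {ω | Finset.univ.sup' Finset.univ_nonempty (fun i => R i ω) ≤ q}
      ⊆ {ω | Finset.univ.sup' Finset.univ_nonempty (fun i => R i ω) ≤ qstar} :=
    fun ω hω => le_trans hω hlt.le
  have := ENNReal.toReal_mono (measure_ne_top μ _) (measure_mono hsub)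
  simp only [Set.mem_setOf_eq] at hqmem
  linarith
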